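/- For every n ≥ 3, there exist n distinct lines in the plane, exactly 3 of which are sunny, covering all points (a, b) with a, b positive integers and a + b ≤ n + 1. (Namely, horizontal lines y = 1, …, n−3 plus three sunny lines covering the translated copy of P_3 given by points with b ≥ n − 2.) -/

import Mathlib

structure Line where
  a : ℝ
  b : ℝ
  c : ℝ
  nontriv : a ≠ 0 ∨ b ≠ 0

def Line.toSet (L : Line) : Set (ℝ × ℝ) := {p | L.a * p.1 + L.b * p.2 + L.c = 0}

/-- A line is sunny if it is not parallel to the x-axis (`a ≠ 0`), not parallel to the
y-axis (`b ≠ 0`), and not parallel to the line `x + y = 0` (`a ≠ b`). -/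
def Line.Sunny (L : Line) : Prop := L.a ≠ 0 ∧ L.b ≠ 0 ∧ L.a ≠ L.b

/-- The triangular grid `P n` of points `(a, b)` with `a, b ≥ 1` integers and `a + b ≤ n + 1`,
viewed in the real plane. -/
def triGrid (n : ℕ) : Set (ℝ × ℝ) :=
  {p | ∃ a b : ℤ, 1 ≤ a ∧ 1 ≤ b ∧ a + b ≤ (n : ℤ) + 1 ∧ p = ((a : ℝ), (b : ℝ))}

/-- The lines of the construction: for `k = n-1, n-2, n-3` three sunny lines of slopes
`-1/2`, `-2`, `1` respectively; for smaller `k` the horizontal line `y = k + 1`. -/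
noncomputable def myLine (n k : ℕ) : Line :=
  if k + 1 = n then ⟨1, 2, -(2*(n:ℝ)-1), Or.inl one_ne_zero⟩
  else if k + 2 = n then ⟨2, 1, -((n:ℝ)+2), Or.inl two_ne_zero⟩
  else if k + 3 = n then ⟨1, -1, (n:ℝ)-3, Or.inl one_ne_zero⟩
  else ⟨0, 1, -((k:ℝ)+1), Or.inr one_ne_zero⟩

lemma Line.toSet_eq_rel {L M : Line} (hL : L.b ≠ 0) (h : L.toSet = M.toSet) :
    M.a * L.b = M.b * L.a ∧ M.c * L.b = M.b * L.c := by
  have p0 : ((0:ℝ), -L.c / L.b) ∈ L.toSet := by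
    simp only [Line.toSet, Set.mem_setOf_eq]; field_simp; ring
  have p1 : ((1:ℝ), -(L.a + L.c) / L.b) ∈ L.toSet := by
    simp only [Line.toSet, Set.mem_setOf_eq]; field_simp; ring
  rw [h] at p0 p1
  simp only [Line.toSet, Set.mem_setOf_eq] at p0 p1
  have q0 : M.b * (-L.c) + M.c * L.b = 0 := by
    have := mul_eq_zero_of_left p0 L.b
    field_simp at this ⊢
    linarith
  have q1 : M.a * L.b + M.b * (-(L.a + L.c)) + M.c * L.b = 0 := by
    have := mul_eq_zero_of_left p1 L.b
    field_simp at this ⊢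
    linarith
  constructor <;> linarith

theorem exists_three_sunny_cover (n : ℕ) (hn : 3 ≤ n) :
    ∃ ℓ : Fin n → Line,
      Function.Injective (fun i => (ℓ i).toSet) ∧
      Set.ncard {i | (ℓ i).Sunny} = 3 ∧
      (∀ p ∈ triGrid n, ∃ i, p ∈ (ℓ i).toSet) := by
  refine ⟨fun i => myLine n i.val, ?_, ?_, ?_⟩
  · -- injectivity
    intro i j h
    simp only [myLine] at h
    apply Fin.ext
    split_ifs at h with h1 h2 h3 h4 h5 h6 h7 h8 h9 <;>
      first
      | omega
      | (exfalso
         have hrel := (Line.toSet_eq_rel (by norm_num) h).1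
         dsimp only at hrel
         norm_num at hrel
         done)
      | (have := (Line.toSet_eq_rel (by norm_num) h).2
         dsimp only at this
         have hij : (i.val : ℝ) = (j.val : ℝ) := by linarith
         exact_mod_cast hij)
  · -- exactly three sunny lines
    rw [Set.ncard_eq_three]
    refine ⟨⟨n-3, by omega⟩, ⟨n-2, by omega⟩, ⟨n-1, by omega⟩, ?_, ?_, ?_, ?_⟩
    · simp only [ne_eq, Fin.mk.injEq]; omega
    · simp only [ne_eq, Fin.mk.injEq]; omega
    · simp only [ne_eq, Fin.mk.injEq]; omega
    · ext i
      simp only [Set.mem_setOf_eq, Set.mem_insert_iff, Set.mem_singleton_iff, Fin.ext_iff]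
      simp only [myLine]
      split_ifs with h1 h2 h3
      · simp only [Line.Sunny]
        norm_num
        omega
      · simp only [Line.Sunny]
        norm_num
        omega
      · simp only [Line.Sunny]
        norm_num
        omega
      · simp only [Line.Sunny]
        norm_num
        omega
  · -- coverage
    rintro p ⟨a, b, ha, hb, hab, rfl⟩
    by_cases hbig : b + 3 ≤ (n : ℤ)
    · -- horizontal line y = b
      refine ⟨⟨(b-1).toNat, by omega⟩, ?_⟩
      have hk1 : (b-1).toNat + 1 ≠ n := by omega
      have hk2 : (b-1).toNat + 2 ≠ n := by omega
      have hk3 : (b-1).toNat + 3 ≠ n := by omega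
      simp only [myLine, if_neg hk1, if_neg hk2, if_neg hk3]
      show (0:ℝ) * _ + 1 * _ + -(((b-1).toNat : ℝ) + 1) = 0
      have : (((b-1).toNat : ℤ) : ℝ) = (b:ℝ) - 1 := by
        rw [Int.toNat_of_nonneg (by omega)]; push_cast; ring
      push_cast at this ⊢
      linarith
    · have hcases : (b = (n:ℤ) - 2 ∧ (a = 1 ∨ a = 2 ∨ a = 3)) ∨
          (b = (n:ℤ) - 1 ∧ (a = 1 ∨ a = 2)) ∨ (b = (n:ℤ) ∧ a = 1) := by omega
      have hL1 : ∀ (hh : n - 3 < n), ((a:ℝ), (b:ℝ)) ∈ (myLine n (⟨n-3, hh⟩ : Fin n).val).toSet ↔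
          (1:ℝ) * a + (-1) * b + ((n:ℝ)-3) = 0 := by
        intro hh
        have h1 : (n-3) + 1 ≠ n := by omega
        have h2 : (n-3) + 2 ≠ n := by omega
        have h3 : (n-3) + 3 = n := by omega
        simp only [myLine, if_neg h1, if_neg h2, if_pos h3, Line.toSet, Set.mem_setOf_eq]
      have hL2 : ∀ (hh : n - 2 < n), ((a:ℝ), (b:ℝ)) ∈ (myLine n (⟨n-2, hh⟩ : Fin n).val).toSet ↔
          (2:ℝ) * a + 1 * b + -((n:ℝ)+2) = 0 := by
        intro hh
        have h1 : (n-2) + 1 ≠ n := by omega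
        have h2 : (n-2) + 2 = n := by omega
        simp only [myLine, if_neg h1, if_pos h2, Line.toSet, Set.mem_setOf_eq]
      have hL3 : ∀ (hh : n - 1 < n), ((a:ℝ), (b:ℝ)) ∈ (myLine n (⟨n-1, hh⟩ : Fin n).val).toSet ↔
          (1:ℝ) * a + 2 * b + -(2*(n:ℝ)-1) = 0 := by
        intro hh
        have h1 : (n-1) + 1 = n := by omega
        simp only [myLine, if_pos h1, Line.toSet, Set.mem_setOf_eq]
      have hnr : ((n:ℤ):ℝ) = (n:ℝ) := by push_cast; ring
      rcases hcases with ⟨hb', ha' | ha' | ha'⟩ | ⟨hb', ha' | ha'⟩ | ⟨hb', ha'⟩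
      · exact ⟨⟨n-3, by omega⟩, (hL1 (by omega)).mpr (by subst hb' ha'; push_cast; ring)⟩
      · exact ⟨⟨n-2, by omega⟩, (hL2 (by omega)).mpr (by subst hb' ha'; push_cast; ring)⟩
      · exact ⟨⟨n-1, by omega⟩, (hL3 (by omega)).mpr (by subst hb' ha'; push_cast; ring)⟩
      · exact ⟨⟨n-1, by omega⟩, (hL3 (by omega)).mpr (by subst hb' ha'; push_cast; ring)⟩
      · exact ⟨⟨n-3, by omega⟩, (hL1 (by omega)).mpr (by subst hb' ha'; push_cast; ring)⟩
      · exact ⟨⟨n-2, by omega⟩, (hL2 (by omega)).mpr (by subst hb' ha'; push_cast; ring)⟩
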